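/- Let P be a finite set of parallel paths with conductances c_p(β) > 0 strictly increasing in β_p, lengths b_p ≥ 0, demand d > 0, and equilibrium delay L(β) = (d + Σ_p c_p(β_p) b_p)/(Σ_p c_p(β_p)). If β'' ≥ β' componentwise with strict inequality in some component, and L(β') > max_p b_p, then L(β'') < L(β'). -/

import Mathlib

theorem stmt_7 {P : Type*} [Fintype P] [Nonempty P]
    (c : P → ℝ → ℝ) (b : P → ℝ) (d : ℝ)
    (hcpos : ∀ p t, 0 < c p t) (hcmono : ∀ p, StrictMono (c p))
    (hb : ∀ p, 0 ≤ b p) (hd : 0 < d)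
    (L : (P → ℝ) → ℝ)
    (hL : ∀ β : P → ℝ, L β = (d + ∑ p, c p (β p) * b p) / (∑ p, c p (β p)))
    (β' β'' : P → ℝ) (h0' : ∀ p, 0 ≤ β' p) (h0'' : ∀ p, 0 ≤ β'' p)
    (hge : ∀ p, β' p ≤ β'' p) (hstrict : ∃ p, β' p < β'' p)
    (hused : ∀ p, b p < L β') :
    L β'' < L β' := by
  have hS' : (0:ℝ) < ∑ p, c p (β' p) :=
    Finset.sum_pos (fun p _ => hcpos p (β' p)) Finset.univ_nonempty
  have hS'' : (0:ℝ) < ∑ p, c p (β'' p) :=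
    Finset.sum_pos (fun p _ => hcpos p (β'' p)) Finset.univ_nonempty
  have hLeq : d + ∑ p, c p (β' p) * b p = L β' * ∑ p, c p (β' p) := by
    rw [hL]; field_simp
  -- key sum inequality
  have hkey : ∑ p, (c p (β'' p) - c p (β' p)) * b p
      < ∑ p, (c p (β'' p) - c p (β' p)) * L β' := by
    obtain ⟨q, hq⟩ := hstrict
    refine Finset.sum_lt_sum (fun p _ => ?_) ⟨q, Finset.mem_univ q, ?_⟩
    · have h1 : 0 ≤ c p (β'' p) - c p (β' p) :=
        sub_nonneg.mpr ((hcmono p).monotone (hge p))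
      exact mul_le_mul_of_nonneg_left (le_of_lt (hused p)) h1
    · have h1 : 0 < c q (β'' q) - c q (β' q) := sub_pos.mpr ((hcmono q) hq)
      exact (mul_lt_mul_iff_right₀ h1).mpr (hused q)
  rw [hL β'', div_lt_iff₀ hS'']
  have hsplit : ∀ p, c p (β'' p) * b p
      = c p (β' p) * b p + (c p (β'' p) - c p (β' p)) * b p := by
    intro p; ring
  calc d + ∑ p, c p (β'' p) * b p
      = (d + ∑ p, c p (β' p) * b p) + ∑ p, (c p (β'' p) - c p (β' p)) * b p := by
        simp_rw [hsplit]; rw [Finset.sum_add_distrib]; ring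
    _ < L β' * (∑ p, c p (β' p)) + ∑ p, (c p (β'' p) - c p (β' p)) * L β' := by
        rw [hLeq]; exact add_lt_add_right hkey _
    _ = L β' * ∑ p, c p (β'' p) := by
        have h : ∑ p, (c p (β'' p) - c p (β' p)) * L β'
            = L β' * ∑ p, c p (β'' p) - L β' * ∑ p, c p (β' p) := by
          rw [Finset.mul_sum, Finset.mul_sum, ← Finset.sum_sub_distrib]
          exact Finset.sum_congr rfl (fun p _ => by ring)
        rw [h]; ring
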